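/- Let V be a matricial operator system inside Matrix (Fin d) (Fin d) ℂ, let B be a finite-dimensional C*-algebra, and let i : V → B be a unital complete order embedding that has the extension property and is rigid. If Φ : ℝ → (V →ₗ[ℂ] V) satisfies Φ(0) = id, Φ(s+t) = Φ(s) ∘ Φ(t) for all s,t ∈ ℝ (so each Φ(t) is invertible with inverse Φ(−t)), each Φ(t) is unital completely positive, and t ↦ Φ(t) is continuous in operator norm, then there exists Ψ : ℝ → (B →ₗ[ℂ] B) with Ψ(0) = id, Ψ(s+t) = Ψ(s) ∘ Ψ(t), each Ψ(t) unital completely positive, t ↦ Ψ(t) continuous, and Ψ(t) ∘ i = i ∘ Φ(t) for all t ∈ ℝ; moreover for each t the map Ψ(t) is the unique unital completely positive map on B satisfying Ψ(t) ∘ i = i ∘ Φ(t), and each Ψ(t) is a *-algebra automorphism of B (multiplicative and star-preserving). -/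

import Mathlib

open scoped NNReal ComplexOrder

/-- The `(n*d) × (n*d)` block complex matrix associated to an `n × n` matrix whose entries
are `d × d` complex matrices. -/
def blockMat {n d : ℕ} (M : Fin n → Fin n → Matrix (Fin d) (Fin d) ℂ) :
    Matrix (Fin n × Fin d) (Fin n × Fin d) ℂ :=
  Matrix.of fun p q => M p.1 q.1 p.2 q.2

/-- An `n × n` matrix with entries in a subspace `V` of `d × d` complex matrices is positive if
the associated block complex matrix is positive semidefinite. -/
def PosOverV {d : ℕ} {V : Submodule ℂ (Matrix (Fin d) (Fin d) ℂ)} {n : ℕ}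
    (M : Fin n → Fin n → V) : Prop :=
  (blockMat fun k l => (M k l : Matrix (Fin d) (Fin d) ℂ)).PosSemidef

/-- Positivity of an element of the `n × n` matrices over a C*-algebra `B`: it is positive
iff it factors as `star y * y`. -/
def PosOverB {B : Type*} [Ring B] [StarRing B] {n : ℕ}
    (x : Matrix (Fin n) (Fin n) B) : Prop :=
  ∃ y : Matrix (Fin n) (Fin n) B, x = star y * y

section Defs

variable {d : ℕ} (V : Submodule ℂ (Matrix (Fin d) (Fin d) ℂ))
variable (B : Type*) [NormedRing B] [StarRing B] [CStarRing B] [NormedAlgebra ℂ B]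
  [CompleteSpace B] [StarModule ℂ B]

/-- A linear map on a matricial operator system `V` is unital completely positive. -/
def IsUCPVV (h1 : (1 : Matrix (Fin d) (Fin d) ℂ) ∈ V) (φ : V →ₗ[ℂ] V) : Prop :=
  φ ⟨1, h1⟩ = ⟨1, h1⟩ ∧
  ∀ (n : ℕ) (M : Fin n → Fin n → V), PosOverV M → PosOverV fun k l => φ (M k l)

/-- A linear map from a matricial operator system `V` into a C*-algebra `B` is unital
completely positive. -/
def IsUCPVB (h1 : (1 : Matrix (Fin d) (Fin d) ℂ) ∈ V) (θ : V →ₗ[ℂ] B) : Prop :=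
  θ ⟨1, h1⟩ = 1 ∧
  ∀ (n : ℕ) (M : Fin n → Fin n → V), PosOverV M →
    PosOverB (Matrix.of fun k l => θ (M k l))

/-- A linear map on a C*-algebra `B` is unital completely positive. -/
def IsUCPBB (ψ : B →ₗ[ℂ] B) : Prop :=
  ψ 1 = 1 ∧
  ∀ (n : ℕ) (x : Matrix (Fin n) (Fin n) B), PosOverB x → PosOverB (x.map ⇑ψ)

/-- `i : V → B` is a unital complete order embedding: it is unital and for every `n`, an
`n × n` matrix over `V` is positive iff its entrywise image under `i` is positive. -/
def IsUCOEmbedding (h1 : (1 : Matrix (Fin d) (Fin d) ℂ) ∈ V) (i : V →ₗ[ℂ] B) : Prop :=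
  (i ⟨1, h1⟩ = 1) ∧
  ∀ (n : ℕ) (M : Fin n → Fin n → V),
    PosOverV M ↔ PosOverB (Matrix.of fun k l => i (M k l))

/-- `i : V → B` has the extension property: every UCP map `θ : V → B` extends to a UCP map
on all of `B` through `i`. -/
def HasExtensionProperty (h1 : (1 : Matrix (Fin d) (Fin d) ℂ) ∈ V) (i : V →ₗ[ℂ] B) : Prop :=
  ∀ θ : V →ₗ[ℂ] B, IsUCPVB V B h1 θ →
    ∃ Θ : B →ₗ[ℂ] B, IsUCPBB B Θ ∧ ∀ v : V, Θ (i v) = θ v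

/-- `i : V → B` is rigid: the only UCP map on `B` fixing the image of `i` is the identity. -/
def IsRigid (i : V →ₗ[ℂ] B) : Prop :=
  ∀ ψ : B →ₗ[ℂ] B, IsUCPBB B ψ → (∀ v : V, ψ (i v) = i v) → ψ = LinearMap.id

end Defs

namespace MyAux

abbrev auxCStar (B : Type*) [NormedRing B] [StarRing B] [CStarRing B] [NormedAlgebra ℂ B]
    [CompleteSpace B] [StarModule ℂ B] : CStarAlgebra B :=
  { ‹NormedRing B›, ‹StarRing B›, ‹CStarRing B›, ‹NormedAlgebra ℂ B›, ‹CompleteSpace B›,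
    ‹StarModule ℂ B› with }

variable {B : Type*} [NormedRing B] [StarRing B] [CStarRing B] [NormedAlgebra ℂ B]
  [CompleteSpace B] [StarModule ℂ B]

/-- Order-free positivity in `B`. -/
def BPos (b : B) : Prop := ∃ c : B, b = star c * c

lemma bpos_of_nonneg :
    letI := auxCStar B
    letI : PartialOrder B := CStarAlgebra.spectralOrder B
    letI : StarOrderedRing B := CStarAlgebra.spectralOrderedRing B
    ∀ {b : B}, 0 ≤ b → BPos b := by
  letI := auxCStar B
  letI : PartialOrder B := CStarAlgebra.spectralOrder B
  letI : StarOrderedRing B := CStarAlgebra.spectralOrderedRing B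
  intro b hb
  refine ⟨CFC.sqrt b, ?_⟩
  have hsa : IsSelfAdjoint (CFC.sqrt b) := (CFC.sqrt_nonneg (a := b)).isSelfAdjoint
  rw [hsa.star_eq, CFC.sqrt_mul_sqrt_self b hb]

lemma nonneg_of_bpos :
    letI := auxCStar B
    letI : PartialOrder B := CStarAlgebra.spectralOrder B
    letI : StarOrderedRing B := CStarAlgebra.spectralOrderedRing B
    ∀ {b : B}, BPos b → 0 ≤ b := by
  letI := auxCStar B
  letI : PartialOrder B := CStarAlgebra.spectralOrder B
  letI : StarOrderedRing B := CStarAlgebra.spectralOrderedRing B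
  rintro b ⟨c, rfl⟩
  exact star_mul_self_nonneg c

lemma bpos_sum {ι : Type*} (s : Finset ι) (f : ι → B) (hf : ∀ m ∈ s, BPos (f m)) :
    BPos (∑ m ∈ s, f m) := by
  letI := auxCStar B
  letI : PartialOrder B := CStarAlgebra.spectralOrder B
  letI : StarOrderedRing B := CStarAlgebra.spectralOrderedRing B
  exact bpos_of_nonneg (Finset.sum_nonneg fun m hm => nonneg_of_bpos (hf m hm))

lemma bpos_eq_zero {p q : B} (hp : BPos p) (hq : BPos q) (h : p + q = 0) : p = 0 := by
  letI := auxCStar B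
  letI : PartialOrder B := CStarAlgebra.spectralOrder B
  letI : StarOrderedRing B := CStarAlgebra.spectralOrderedRing B
  have hp' := nonneg_of_bpos hp
  have hq' := nonneg_of_bpos hq
  have hle : p ≤ 0 := by
    have h2 := add_le_add_right hq' p
    rw [add_zero] at h2
    calc p ≤ p + q := h2
    _ = 0 := h
  exact le_antisymm hle hp'

lemma star_mul_self_apply {n : ℕ} (y : Matrix (Fin n) (Fin n) B) (k l : Fin n) :
    (star y * y) k l = ∑ m, star (y m k) * y m l := by
  simp [Matrix.mul_apply, Matrix.star_apply]

lemma bpos_one_matrix {b : B} (hb : BPos b) :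
    PosOverB (Matrix.of fun _ _ : Fin 1 => b) := by
  obtain ⟨c, rfl⟩ := hb
  refine ⟨Matrix.of fun _ _ : Fin 1 => c, ?_⟩
  ext k l
  rw [star_mul_self_apply]
  simp

lemma bpos_of_one_matrix {x : Matrix (Fin 1) (Fin 1) B} (hx : PosOverB x) :
    BPos (x 0 0) := by
  obtain ⟨y, rfl⟩ := hx
  rw [star_mul_self_apply]
  exact ⟨y 0 0, by simp⟩

lemma posOverB_offdiag {N : Matrix (Fin 2) (Fin 2) B} (h : PosOverB N) :
    N 1 0 = star (N 0 1) := by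
  obtain ⟨y, rfl⟩ := h
  rw [star_mul_self_apply, star_mul_self_apply, star_sum]
  exact Finset.sum_congr rfl fun m _ => by rw [star_mul, star_star]

lemma posOverB_schwarz_mat (x : B) : PosOverB !![1, x; star x, star x * x] := by
  refine ⟨!![1, x; 0, 0], ?_⟩
  ext k l
  rw [star_mul_self_apply]
  fin_cases k <;> fin_cases l <;> simp [Fin.sum_univ_two]

lemma posOverB_schwarz_ineq {N : Matrix (Fin 2) (Fin 2) B} (h : PosOverB N)
    (h00 : N 0 0 = 1) : BPos (N 1 1 - star (N 0 1) * N 0 1) := by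
  obtain ⟨Y, hY⟩ := h
  set a := N 0 1 with ha
  set c : Fin 2 → B := fun m => Y m 0 with hc
  set d : Fin 2 → B := fun m => Y m 1 with hd
  have h11 : N 1 1 = ∑ m, star (d m) * d m := by rw [hY, star_mul_self_apply]
  have h01 : a = ∑ m, star (c m) * d m := by rw [ha, hY, star_mul_self_apply]
  have h10 : ∑ m, star (d m) * c m = star a := by
    have h' := posOverB_offdiag (N := N) ⟨Y, hY⟩
    calc ∑ m, star (d m) * c m = N 1 0 := by rw [hY, star_mul_self_apply]
    _ = star a := h'
  have h00' : ∑ m, star (c m) * c m = 1 := by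
    rw [← h00, hY, star_mul_self_apply]
  have key : N 1 1 - star a * a = ∑ m, star (d m - c m * a) * (d m - c m * a) := by
    have hsum : (∑ m, star (d m - c m * a) * (d m - c m * a))
        = (∑ m, star (d m) * d m) - (∑ m, star (d m) * c m) * a
          - star a * (∑ m, star (c m) * d m) + star a * (∑ m, star (c m) * c m) * a :=
      calc ∑ m, star (d m - c m * a) * (d m - c m * a)
          = ∑ m, (star (d m) * d m - star (d m) * c m * a - star a * (star (c m) * d m)
              + star a * (star (c m) * c m) * a) := Finset.sum_congr rfl fun m _ => by
                simp only [star_sub, star_mul]; noncomm_ring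
        _ = (∑ m, star (d m) * d m) - (∑ m, star (d m) * c m) * a
              - star a * (∑ m, star (c m) * d m) + star a * (∑ m, star (c m) * c m) * a := by
            simp only [Finset.sum_add_distrib, Finset.sum_sub_distrib, ← Finset.sum_mul,
              ← Finset.mul_sum]
    rw [hsum, h11, h10, ← h01, h00', mul_one]
    noncomm_ring
  rw [key]
  exact bpos_sum _ _ fun m _ => ⟨_, rfl⟩

end MyAux


namespace MyAux

variable {d0 : ℕ}
variable {B : Type*} [NormedRing B] [StarRing B] [CStarRing B] [NormedAlgebra ℂ B]
  [CompleteSpace B] [StarModule ℂ B]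

lemma ucp_bpos {ψ : B →ₗ[ℂ] B} (hψ : IsUCPBB B ψ) {b : B} (hb : BPos b) : BPos (ψ b) := by
  have h := hψ.2 1 _ (bpos_one_matrix hb)
  have h' := bpos_of_one_matrix h
  simpa [Matrix.map_apply] using h'

lemma ucp_map_star {ψ : B →ₗ[ℂ] B} (hψ : IsUCPBB B ψ) (x : B) : ψ (star x) = star (ψ x) := by
  have h := hψ.2 2 _ (posOverB_schwarz_mat x)
  have h' := posOverB_offdiag h
  simpa [Matrix.map_apply] using h'

lemma ucp_schwarz {ψ : B →ₗ[ℂ] B} (hψ : IsUCPBB B ψ) (x : B) :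
    BPos (ψ (star x * x) - star (ψ x) * ψ x) := by
  have h := hψ.2 2 _ (posOverB_schwarz_mat x)
  have h' := posOverB_schwarz_ineq h (by simp [Matrix.map_apply, hψ.1])
  simpa [Matrix.map_apply] using h'

lemma ucp_mul_star_self {ψ φ : B →ₗ[ℂ] B} (hψ : IsUCPBB B ψ) (hφ : IsUCPBB B φ)
    (h1 : φ.comp ψ = LinearMap.id) (h2 : ψ.comp φ = LinearMap.id) (x : B) :
    ψ (star x * x) = star (ψ x) * ψ x := by
  have hφψ : ∀ b, φ (ψ b) = b := fun b => LinearMap.congr_fun h1 b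
  have hψφ : ∀ b, ψ (φ b) = b := fun b => LinearMap.congr_fun h2 b
  have hbp : BPos (ψ (star x * x) - star (ψ x) * ψ x) := ucp_schwarz hψ x
  have hbq : BPos (φ (star (ψ x) * ψ x) - star x * x) := by
    have h' := ucp_schwarz hφ (ψ x)
    rwa [hφψ x] at h'
  have hq' : BPos (ψ (φ (star (ψ x) * ψ x) - star x * x)) := ucp_bpos hψ hbq
  have heq : ψ (φ (star (ψ x) * ψ x) - star x * x)
      = -(ψ (star x * x) - star (ψ x) * ψ x) := by
    rw [map_sub, hψφ]; abel
  rw [heq] at hq'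
  have hzero : ψ (star x * x) - star (ψ x) * ψ x = 0 :=
    bpos_eq_zero hbp hq' (by abel)
  exact sub_eq_zero.mp hzero

lemma ucp_polar {ψ φ : B →ₗ[ℂ] B} (hψ : IsUCPBB B ψ) (hφ : IsUCPBB B φ)
    (h1 : φ.comp ψ = LinearMap.id) (h2 : ψ.comp φ = LinearMap.id) (a b : B) :
    ψ (star a * b) = star (ψ a) * ψ b := by
  have E : ∀ a b : B, ψ (star a * b) + ψ (star b * a)
      = star (ψ a) * ψ b + star (ψ b) * ψ a := by
    intro a b
    have ha := ucp_mul_star_self hψ hφ h1 h2 a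
    have hb := ucp_mul_star_self hψ hφ h1 h2 b
    have h := ucp_mul_star_self hψ hφ h1 h2 (a + b)
    have expand1 : star (a + b) * (a + b)
        = star a * a + star b * b + (star a * b + star b * a) := by
      rw [star_add]; noncomm_ring
    have expand2 : star (ψ a + ψ b) * (ψ a + ψ b)
        = star (ψ a) * ψ a + star (ψ b) * ψ b + (star (ψ a) * ψ b + star (ψ b) * ψ a) := by
      rw [star_add]; noncomm_ring
    rw [expand1, map_add, map_add, ha, hb, map_add, map_add, expand2] at h
    exact add_left_cancel h
  have E1 := E a b
  have E2' := E a ((Complex.I : ℂ) • b)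
  have hsm1 : star a * ((Complex.I : ℂ) • b) = (Complex.I : ℂ) • (star a * b) := by
    rw [mul_smul_comm]
  have hsm2 : star ((Complex.I : ℂ) • b) * a = (-(Complex.I : ℂ)) • (star b * a) := by
    rw [star_smul, smul_mul_assoc]
    congr 1
    simp [Complex.star_def, Complex.conj_I]
  have hsm3 : star ((Complex.I : ℂ) • ψ b) = (-(Complex.I : ℂ)) • star (ψ b) := by
    rw [star_smul]
    congr 1
    simp [Complex.star_def, Complex.conj_I]
  rw [hsm1, hsm2, map_smul, map_smul, map_smul, hsm3, mul_smul_comm, smul_mul_assoc] at E2'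
  -- E2' : I • ψ(star a * b) + (-I) • ψ(star b * a) = I • (star ψa * ψb) + (-I) • (star ψb * ψa)
  have E2 : ψ (star a * b) - ψ (star b * a) = star (ψ a) * ψ b - star (ψ b) * ψ a := by
    have hI : (Complex.I : ℂ) ≠ 0 := Complex.I_ne_zero
    apply smul_right_injective B hI
    simpa [smul_sub, neg_smul, sub_eq_add_neg] using E2'
  have : (2 : ℂ) • ψ (star a * b) = (2 : ℂ) • (star (ψ a) * ψ b) := by
    have := congrArg₂ (· + ·) E1 E2
    rw [two_smul, two_smul]
    calc ψ (star a * b) + ψ (star a * b)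
        = (ψ (star a * b) + ψ (star b * a)) + (ψ (star a * b) - ψ (star b * a)) := by abel
      _ = (star (ψ a) * ψ b + star (ψ b) * ψ a)
          + (star (ψ a) * ψ b - star (ψ b) * ψ a) := by rw [E1, E2]
      _ = star (ψ a) * ψ b + star (ψ a) * ψ b := by abel
  exact smul_right_injective B (two_ne_zero) this

lemma ucp_mul {ψ φ : B →ₗ[ℂ] B} (hψ : IsUCPBB B ψ) (hφ : IsUCPBB B φ)
    (h1 : φ.comp ψ = LinearMap.id) (h2 : ψ.comp φ = LinearMap.id) (x y : B) :
    ψ (x * y) = ψ x * ψ y := by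
  have h := ucp_polar hψ hφ h1 h2 (star x) y
  rw [star_star] at h
  rw [h, ucp_map_star hψ, star_star]

end MyAux

namespace MyAux

variable {B : Type*} [NormedRing B] [StarRing B] [CStarRing B] [NormedAlgebra ℂ B]
  [CompleteSpace B] [StarModule ℂ B]

lemma ucp_fix_algebraMap {ψ : B →ₗ[ℂ] B} (hψ : IsUCPBB B ψ) (r : ℝ) :
    ψ (algebraMap ℝ B r) = algebraMap ℝ B r := by
  have halg : algebraMap ℝ B r = (r : ℂ) • (1 : B) := by
    rw [Algebra.algebraMap_eq_smul_one, ← algebraMap_smul ℂ r (1 : B)]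
    norm_num
  rw [halg, map_smul, hψ.1]

lemma ucp_norm_bound_sa {ψ : B →ₗ[ℂ] B} (hψ : IsUCPBB B ψ) {h : B}
    (hh : IsSelfAdjoint h) : ‖ψ h‖ ≤ 3 * ‖h‖ := by
  rcases subsingleton_or_nontrivial B with hS | hN
  · have h0 : ψ h = 0 := Subsingleton.elim _ _
    rw [h0, norm_zero]
    positivity
  letI := auxCStar B
  letI : PartialOrder B := CStarAlgebra.spectralOrder B
  letI : StarOrderedRing B := CStarAlgebra.spectralOrderedRing B
  have hb1 : 0 ≤ algebraMap ℝ B ‖h‖ - h := sub_nonneg.mpr hh.le_algebraMap_norm_self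
  have hb2 : 0 ≤ h + algebraMap ℝ B ‖h‖ := by
    have h2 := add_le_add_left hh.neg_algebraMap_norm_le_self (algebraMap ℝ B ‖h‖)
    simpa using h2
  have hp1 : 0 ≤ algebraMap ℝ B ‖h‖ - ψ h := by
    have h3 := nonneg_of_bpos (ucp_bpos hψ (bpos_of_nonneg hb1))
    rwa [map_sub, ucp_fix_algebraMap hψ] at h3
  have hp2 : 0 ≤ ψ h + algebraMap ℝ B ‖h‖ := by
    have h3 := nonneg_of_bpos (ucp_bpos hψ (bpos_of_nonneg hb2))
    rwa [map_add, ucp_fix_algebraMap hψ] at h3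
  have hle : ψ h + algebraMap ℝ B ‖h‖ ≤ algebraMap ℝ B (2 * ‖h‖) := by
    rw [two_mul, map_add]
    exact add_le_add_left (sub_nonneg.mp hp1) _
  have hnorm : ‖ψ h + algebraMap ℝ B ‖h‖‖ ≤ ‖algebraMap ℝ B (2 * ‖h‖)‖ :=
    CStarAlgebra.norm_le_norm_of_nonneg_of_le hp2 hle
  have halg : ∀ r : ℝ, ‖algebraMap ℝ B r‖ ≤ |r| := by
    intro r
    rw [norm_algebraMap, norm_one, mul_one]
    exact le_of_eq (Real.norm_eq_abs r)
  calc ‖ψ h‖ = ‖(ψ h + algebraMap ℝ B ‖h‖) - algebraMap ℝ B ‖h‖‖ := by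
        congr 1
        abel
    _ ≤ ‖ψ h + algebraMap ℝ B ‖h‖‖ + ‖algebraMap ℝ B ‖h‖‖ := norm_sub_le _ _
    _ ≤ |2 * ‖h‖| + |‖h‖| := add_le_add (hnorm.trans (halg _)) (halg _)
    _ = 3 * ‖h‖ := by
        rw [abs_of_nonneg (by positivity), abs_of_nonneg (norm_nonneg _)]
        ring

lemma ucp_norm_bound {ψ : B →ₗ[ℂ] B} (hψ : IsUCPBB B ψ) (x : B) : ‖ψ x‖ ≤ 6 * ‖x‖ := by
  set h : B := (2⁻¹ : ℂ) • (x + star x) with hh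
  set k : B := (-(2⁻¹) * Complex.I : ℂ) • (x - star x) with hk
  have hx : x = h + Complex.I • k := by
    rw [hh, hk, smul_smul]
    have hc : (Complex.I : ℂ) * (-(2⁻¹) * Complex.I) = (2⁻¹ : ℂ) := by
      rw [mul_comm, mul_assoc, Complex.I_mul_I]
      ring
    rw [hc, ← smul_add]
    have h2 : x + star x + (x - star x) = (2 : ℂ) • x := by
      rw [two_smul]
      abel
    rw [h2, smul_smul]
    norm_num
  have hsa_h : IsSelfAdjoint h := by
    rw [hh, IsSelfAdjoint, star_smul]
    have h1 : star (x + star x) = x + star x := by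
      rw [star_add, star_star]
      abel
    rw [h1]
    congr 1
    simp [Complex.star_def, map_inv₀]
  have hsa_k : IsSelfAdjoint k := by
    rw [hk, IsSelfAdjoint, star_smul]
    have h1 : star (x - star x) = -(x - star x) := by
      rw [star_sub, star_star]
      abel
    rw [h1, smul_neg, ← neg_smul]
    congr 1
    simp only [Complex.star_def, map_mul, map_neg, map_inv₀, Complex.conj_I,
      Complex.conj_ofNat]
    ring
  have hnh : ‖h‖ ≤ ‖x‖ := by
    rw [hh, norm_smul]
    have : ‖(2⁻¹ : ℂ)‖ = 2⁻¹ := by norm_num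
    rw [this]
    calc 2⁻¹ * ‖x + star x‖ ≤ 2⁻¹ * (‖x‖ + ‖star x‖) := by
          gcongr
          exact norm_add_le _ _
      _ = ‖x‖ := by rw [norm_star]; ring
  have hnk : ‖k‖ ≤ ‖x‖ := by
    rw [hk, norm_smul]
    have : ‖(-(2⁻¹) * Complex.I : ℂ)‖ = 2⁻¹ := by simp
    rw [this]
    calc 2⁻¹ * ‖x - star x‖ ≤ 2⁻¹ * (‖x‖ + ‖star x‖) := by
          gcongr
          exact norm_sub_le _ _
      _ = ‖x‖ := by rw [norm_star]; ring
  calc ‖ψ x‖ = ‖ψ h + Complex.I • ψ k‖ := by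
        rw [hx]
        simp only [map_add, map_smul]
    _ ≤ ‖ψ h‖ + ‖Complex.I • ψ k‖ := norm_add_le _ _
    _ = ‖ψ h‖ + ‖ψ k‖ := by rw [norm_smul, Complex.norm_I, one_mul]
    _ ≤ 3 * ‖h‖ + 3 * ‖k‖ := add_le_add (ucp_norm_bound_sa hψ hsa_h) (ucp_norm_bound_sa hψ hsa_k)
    _ ≤ 3 * ‖x‖ + 3 * ‖x‖ := by gcongr <;> norm_num
    _ = 6 * ‖x‖ := by ring

lemma posOverB_of_tendsto [FiniteDimensional ℂ B] {n : ℕ} {x : ℕ → Matrix (Fin n) (Fin n) B}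
    (hx : ∀ m, PosOverB (x m)) {xl : Matrix (Fin n) (Fin n) B}
    (h : ∀ k l, Filter.Tendsto (fun m => x m k l) Filter.atTop (nhds (xl k l))) :
    PosOverB xl := by
  letI := auxCStar B
  letI : PartialOrder B := CStarAlgebra.spectralOrder B
  letI : StarOrderedRing B := CStarAlgebra.spectralOrderedRing B
  choose Y hY using hx
  have hdiag : ∀ k : Fin n, ∃ C : ℝ, ∀ m, ‖x m k k‖ ≤ C := by
    intro k
    obtain ⟨C, hC⟩ := ((h k k).norm).bddAbove_range
    exact ⟨C, fun m => hC (Set.mem_range_self m)⟩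
  choose C hC using hdiag
  set R : ℝ := Real.sqrt (∑ k, C k) with hR
  have hR0 : 0 ≤ R := Real.sqrt_nonneg _
  have hCk : ∀ k, 0 ≤ C k := fun k => le_trans (norm_nonneg _) (hC k 0)
  have hbound : ∀ m, ∀ p : Fin n × Fin n, ‖Y m p.1 p.2‖ ≤ R := by
    intro m p
    have hterm : star (Y m p.1 p.2) * Y m p.1 p.2 ≤ x m p.2 p.2 := by
      have hxm : x m p.2 p.2 = ∑ j, star (Y m j p.2) * Y m j p.2 := by
        rw [hY m, star_mul_self_apply]
      rw [hxm]
      exact Finset.single_le_sum (f := fun j => star (Y m j p.2) * Y m j p.2)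
        (fun j _ => star_mul_self_nonneg _) (Finset.mem_univ p.1)
    have hnorm1 : ‖star (Y m p.1 p.2) * Y m p.1 p.2‖ ≤ ‖x m p.2 p.2‖ :=
      CStarAlgebra.norm_le_norm_of_nonneg_of_le (star_mul_self_nonneg _) hterm
    have h2 : ‖Y m p.1 p.2‖ ^ 2 ≤ ∑ k, C k := by
      rw [pow_two, ← CStarRing.norm_star_mul_self]
      calc ‖star (Y m p.1 p.2) * Y m p.1 p.2‖ ≤ ‖x m p.2 p.2‖ := hnorm1
        _ ≤ C p.2 := hC p.2 m
        _ ≤ ∑ k, C k := Finset.single_le_sum (fun k _ => hCk k) (Finset.mem_univ p.2)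
    rw [hR]
    exact (Real.le_sqrt (norm_nonneg _) (Finset.sum_nonneg fun k _ => hCk k)).mpr h2
  set g : ℕ → (Fin n × Fin n → B) := fun m p => Y m p.1 p.2 with hg
  haveI := FiniteDimensional.proper ℂ (Fin n × Fin n → B)
  have hmem : ∀ m, g m ∈ Metric.closedBall (0 : Fin n × Fin n → B) R := by
    intro m
    rw [Metric.mem_closedBall, dist_zero_right]
    exact (pi_norm_le_iff_of_nonneg hR0).mpr fun p => hbound m p
  obtain ⟨yl, _, φ, hφ, hconv⟩ :=
    (isCompact_closedBall (0 : Fin n × Fin n → B) R).tendsto_subseq hmem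
  refine ⟨Matrix.of fun j k => yl (j, k), ?_⟩
  ext k l
  have h1 : Filter.Tendsto (fun m => x (φ m) k l) Filter.atTop (nhds (xl k l)) :=
    (h k l).comp hφ.tendsto_atTop
  have hentry : ∀ p : Fin n × Fin n,
      Filter.Tendsto (fun m => Y (φ m) p.1 p.2) Filter.atTop (nhds (yl p)) := by
    intro p
    have := tendsto_pi_nhds.mp hconv p
    exact this
  have h2 : Filter.Tendsto (fun m => x (φ m) k l) Filter.atTop
      (nhds ((star (Matrix.of fun j k' => yl (j, k')) * Matrix.of fun j k' => yl (j, k')) k l)) := by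
    have hform : ∀ m, x (φ m) k l = ∑ j, star (Y (φ m) j k) * Y (φ m) j l := by
      intro m
      rw [hY (φ m), star_mul_self_apply]
    simp_rw [hform]
    rw [star_mul_self_apply]
    apply tendsto_finset_sum
    intro j _
    have hjk := hentry (j, k)
    have hjl := hentry (j, l)
    simpa using (hjk.star).mul hjl
  exact tendsto_nhds_unique h1 h2

lemma isUCPBB_of_tendsto [FiniteDimensional ℂ B] {ψ : ℕ → B →ₗ[ℂ] B}
    (hψ : ∀ m, IsUCPBB B (ψ m)) {L : B →ₗ[ℂ] B}
    (h : ∀ b, Filter.Tendsto (fun m => ψ m b) Filter.atTop (nhds (L b))) : IsUCPBB B L := by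
  constructor
  · have h1 := h 1
    have h2 : Filter.Tendsto (fun m => ψ m 1) Filter.atTop (nhds (1 : B)) := by
      simp_rw [fun m => (hψ m).1]
      exact tendsto_const_nhds
    exact tendsto_nhds_unique h1 h2
  · intro n x hx
    have hpos : ∀ m, PosOverB (x.map ⇑(ψ m)) := fun m => (hψ m).2 n x hx
    refine posOverB_of_tendsto hpos fun k l => ?_
    simpa [Matrix.map_apply] using h (x k l)

end MyAux

/-- **Extension of groups** (Theorem 3.7): any continuous one-parameter group of unital
completely positive maps on a matricial operator system `V` extends uniquely, through a rigid
unital complete order embedding with the extension property `i : V → B` into a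
finite-dimensional C*-algebra `B`, to a continuous group of *-algebra automorphisms of `B`. -/
theorem extension_of_ucp_groups
    {d : ℕ} (V : Submodule ℂ (Matrix (Fin d) (Fin d) ℂ))
    (h1 : (1 : Matrix (Fin d) (Fin d) ℂ) ∈ V)
    (hstar : ∀ v ∈ V, v.conjTranspose ∈ V)
    (B : Type*) [NormedRing B] [StarRing B] [CStarRing B] [NormedAlgebra ℂ B]
    [CompleteSpace B] [StarModule ℂ B] [FiniteDimensional ℂ B]
    (i : V →ₗ[ℂ] B)
    (hemb : IsUCOEmbedding V B h1 i)
    (hext : HasExtensionProperty V B h1 i)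
    (hrig : IsRigid V B i)
    (Φ : ℝ → (V →ₗ[ℂ] V))
    (hΦ0 : Φ 0 = LinearMap.id)
    (hΦadd : ∀ s t : ℝ, Φ (s + t) = (Φ s).comp (Φ t))
    (hΦucp : ∀ t : ℝ, IsUCPVV V h1 (Φ t))
    (hΦcont : Continuous fun t : ℝ => LinearMap.toContinuousLinearMap (Φ t)) :
    ∃ Ψ : ℝ → (B →ₗ[ℂ] B),
      Ψ 0 = LinearMap.id ∧
      (∀ s t : ℝ, Ψ (s + t) = (Ψ s).comp (Ψ t)) ∧
      (∀ t : ℝ, IsUCPBB B (Ψ t)) ∧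
      Continuous (fun t : ℝ => LinearMap.toContinuousLinearMap (Ψ t)) ∧
      (∀ (t : ℝ) (v : V), Ψ t (i v) = i (Φ t v)) ∧
      (∀ (t : ℝ) (ψ : B →ₗ[ℂ] B), IsUCPBB B ψ → (∀ v : V, ψ (i v) = i (Φ t v)) →
        ψ = Ψ t) ∧
      (∀ (t : ℝ) (x y : B), Ψ t (x * y) = Ψ t x * Ψ t y) ∧
      (∀ (t : ℝ) (x : B), Ψ t (star x) = star (Ψ t x)) := by
  classical
  have hid : IsUCPBB B (LinearMap.id : B →ₗ[ℂ] B) := by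
    refine ⟨rfl, fun n x hx => ?_⟩
    have hxx : x.map ⇑(LinearMap.id : B →ₗ[ℂ] B) = x := by
      ext k l
      simp [Matrix.map_apply]
    rwa [hxx]
  have hcomp : ∀ ψ φ : B →ₗ[ℂ] B, IsUCPBB B ψ → IsUCPBB B φ → IsUCPBB B (ψ.comp φ) := by
    intro ψ φ hψ hφ
    refine ⟨by simp [LinearMap.comp_apply, hφ.1, hψ.1], fun n x hx => ?_⟩
    have hxx : x.map ⇑(ψ.comp φ) = (x.map ⇑φ).map ⇑ψ := by
      ext k l
      simp [Matrix.map_apply]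
    rw [hxx]
    exact hψ.2 n _ (hφ.2 n x hx)
  have hθ : ∀ t : ℝ, IsUCPVB V B h1 (i.comp (Φ t)) := by
    intro t
    refine ⟨by simp [LinearMap.comp_apply, (hΦucp t).1, hemb.1], fun n M hM => ?_⟩
    have hM' : PosOverV fun k l => (Φ t) (M k l) := (hΦucp t).2 n M hM
    exact (hemb.2 n _).mp hM'
  choose E hE1 hE2 using fun t : ℝ => hext (i.comp (Φ t)) (hθ t)
  have hEfix : ∀ (t : ℝ) (v : V), E t (i v) = i (Φ t v) := fun t v => hE2 t v
  have hΦcomp : ∀ (s t : ℝ) (v : V), Φ s (Φ t v) = Φ (s + t) v := by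
    intro s t v
    rw [hΦadd s t]
    rfl
  have hEinv : ∀ t : ℝ, (E t).comp (E (-t)) = LinearMap.id := by
    intro t
    apply hrig _ (hcomp _ _ (hE1 t) (hE1 (-t)))
    intro v
    rw [LinearMap.comp_apply, hEfix (-t) v, hEfix t _, hΦcomp]
    simp [hΦ0]
  have huniq : ∀ (t : ℝ) (ψ : B →ₗ[ℂ] B), IsUCPBB B ψ → (∀ v, ψ (i v) = i (Φ t v)) →
      ψ = E t := by
    intro t ψ hψ hfix
    have hid' : (E (-t)).comp ψ = LinearMap.id := by
      apply hrig _ (hcomp _ _ (hE1 (-t)) hψ)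
      intro v
      rw [LinearMap.comp_apply, hfix v, hEfix (-t) _, hΦcomp]
      simp [hΦ0]
    calc ψ = LinearMap.id.comp ψ := (LinearMap.id_comp ψ).symm
      _ = ((E t).comp (E (-t))).comp ψ := by rw [hEinv t]
      _ = (E t).comp ((E (-t)).comp ψ) := (LinearMap.comp_assoc _ _ _)
      _ = E t := by rw [hid', LinearMap.comp_id]
  have hE0 : E 0 = LinearMap.id := by
    symm
    apply huniq 0 _ hid
    intro v
    simp [hΦ0]
  have hEadd : ∀ s t : ℝ, E (s + t) = (E s).comp (E t) := by
    intro s t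
    symm
    apply huniq (s + t) _ (hcomp _ _ (hE1 s) (hE1 t))
    intro v
    rw [LinearMap.comp_apply, hEfix t, hEfix s, hΦcomp]
  have hinv' : ∀ t : ℝ, (E (-t)).comp (E t) = LinearMap.id := by
    intro t
    have h' := hEinv (-t)
    rwa [neg_neg] at h'
  have hcont : Continuous fun t : ℝ => LinearMap.toContinuousLinearMap (E t) := by
    haveI : FiniteDimensional ℂ (B →L[ℂ] B) :=
      (LinearMap.toContinuousLinearMap : (B →ₗ[ℂ] B) ≃ₗ[ℂ] (B →L[ℂ] B)).finiteDimensional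
    haveI := FiniteDimensional.proper ℂ (B →L[ℂ] B)
    rw [continuous_iff_seqContinuous]
    intro ts t hts
    apply Filter.tendsto_of_subseq_tendsto
    intro ns hns
    have hball : ∀ s : ℝ, LinearMap.toContinuousLinearMap (E s) ∈
        Metric.closedBall (0 : B →L[ℂ] B) 6 := by
      intro s
      rw [Metric.mem_closedBall, dist_zero_right]
      exact ContinuousLinearMap.opNorm_le_bound _ (by norm_num)
        fun b => MyAux.ucp_norm_bound (hE1 s) b
    obtain ⟨L0, _, φ, hφmono, hφconv⟩ :=
      (isCompact_closedBall (0 : B →L[ℂ] B) 6).tendsto_subseq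
        (x := fun m => LinearMap.toContinuousLinearMap (E (ts (ns m))))
        (fun m => hball (ts (ns m)))
    refine ⟨φ, ?_⟩
    have hpt : ∀ b : B, Filter.Tendsto (fun m => E (ts (ns (φ m))) b) Filter.atTop
        (nhds (L0 b)) := by
      intro b
      exact ((ContinuousLinearMap.apply ℂ B b).continuous.tendsto L0).comp hφconv
    have hLucp : IsUCPBB B (L0 : B →ₗ[ℂ] B) :=
      MyAux.isUCPBB_of_tendsto (fun m => hE1 _) hpt
    have hLfix : ∀ v : V, (L0 : B →ₗ[ℂ] B) (i v) = i (Φ t v) := by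
      intro v
      have hs : Filter.Tendsto (fun m => ts (ns (φ m))) Filter.atTop (nhds t) :=
        hts.comp (hns.comp hφmono.tendsto_atTop)
      have hcontiΦ : Continuous fun s : ℝ => i (Φ s v) := by
        have hc1 : Continuous (fun s : ℝ => (LinearMap.toContinuousLinearMap (Φ s)) v) :=
          hΦcont.eval_const v
        exact (LinearMap.continuous_of_finiteDimensional i).comp hc1
      have h2 : Filter.Tendsto (fun m => i (Φ (ts (ns (φ m))) v)) Filter.atTop
          (nhds (i (Φ t v))) := (hcontiΦ.tendsto t).comp hs
      have h3 : Filter.Tendsto (fun m => E (ts (ns (φ m))) (i v)) Filter.atTop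
          (nhds ((L0 : B →ₗ[ℂ] B) (i v))) := hpt (i v)
      have h4 : (fun m => E (ts (ns (φ m))) (i v)) = fun m => i (Φ (ts (ns (φ m))) v) := by
        funext m
        exact hEfix _ v
      rw [h4] at h3
      exact tendsto_nhds_unique h3 h2
    have hLE : (L0 : B →ₗ[ℂ] B) = E t := huniq t _ hLucp hLfix
    have hL0 : L0 = LinearMap.toContinuousLinearMap (E t) := by
      rw [← hLE]
      ext b
      rfl
    have hgoal : Filter.Tendsto
        ((fun m => LinearMap.toContinuousLinearMap (E (ts (ns m)))) ∘ φ) Filter.atTop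
        (nhds (LinearMap.toContinuousLinearMap (E t))) := by
      rw [← hL0]
      exact hφconv
    exact hgoal
  refine ⟨E, hE0, hEadd, hE1, hcont, hEfix, huniq, ?_, ?_⟩
  · intro t x y
    exact MyAux.ucp_mul (hE1 t) (hE1 (-t)) (hinv' t) (hEinv t) x y
  · intro t x
    exact MyAux.ucp_map_star (hE1 t) x
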